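/- Let a₀, a₁, a₂, c₀, c₁ : ℝ → ℂ be differentiable functions with c₁(t) ≠ 0 for all t, satisfying dc₀/dt = 2(c₁a₀ - a₁c₀) and dc₁/dt = -2a₂c₀. Then the function z₀ = -c₀/c₁ is differentiable and satisfies dz₀/dt = -2(a₀ + a₁z₀ + a₂z₀²). -/

import Mathlib

/-- The Nahm flow on the moduli space of rank-2 degree `-1` co-Higgs bundles:
if `dc₀/dt = 2(c₁a₀ - a₁c₀)` and `dc₁/dt = -2a₂c₀` with `c₁` never zero, then
`z₀ = -c₀/c₁` satisfies `dz₀/dt = -2(a₀ + a₁ z₀ + a₂ z₀²)`. -/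
theorem nahm_flow_rank_two_vector_field
    (a₀ a₁ a₂ c₀ c₁ : ℝ → ℂ)
    (ha₀ : Differentiable ℝ a₀) (ha₁ : Differentiable ℝ a₁)
    (ha₂ : Differentiable ℝ a₂)
    (hc₀ : Differentiable ℝ c₀) (hc₁ : Differentiable ℝ c₁)
    (hne : ∀ t, c₁ t ≠ 0)
    (h0 : ∀ t, deriv c₀ t = 2 * (c₁ t * a₀ t - a₁ t * c₀ t))
    (h1 : ∀ t, deriv c₁ t = -2 * a₂ t * c₀ t) :
    Differentiable ℝ (fun t => -c₀ t / c₁ t) ∧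
    ∀ t, deriv (fun s => -c₀ s / c₁ s) t
        = -2 * (a₀ t + a₁ t * (-c₀ t / c₁ t) + a₂ t * (-c₀ t / c₁ t) ^ 2) := by
  refine ⟨(hc₀.neg).div hc₁ hne, fun t => ?_⟩
  have h := deriv_div (hc₀.neg.differentiableAt) (hc₁.differentiableAt) (hne t) (c := fun s => -c₀ s)
  rw [show (fun s => -c₀ s / c₁ s) = (fun s => -c₀ s) / c₁ from rfl]
  rw [h, deriv.fun_neg, h0, h1]
  field_simp [hne t]
  ring
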